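/- Let p be a prime and let G be an infinite group in which every subgroup other than the trivial subgroup and G itself is cyclic of order p. Suppose G acts by homeomorphisms on a compact Hausdorff space X, the action is minimal (every orbit is dense), and X has no isolated points. Then the action is topologically free: for every s ∈ G with s ≠ e, the set {x ∈ X : s·x ≠ x} is dense in X. -/

import Mathlib

open scoped Pointwise


/-- A Tarski monster group of prime order `p` (an infinite group all of whose proper
nontrivial subgroups are cyclic of order `p`) acting minimally on a compact Hausdorff space
with no isolated points acts topologically freely. -/
theorem stmt_10 {G X : Type*} [Group G] [Infinite G]
    [TopologicalSpace X] [CompactSpace X] [T2Space X] [Nonempty X]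
    [MulAction G X] [ContinuousConstSMul G X]
    (p : ℕ) (hp : p.Prime)
    (htarski : ∀ H : Subgroup G, H ≠ ⊥ → H ≠ ⊤ → IsCyclic H ∧ Nat.card H = p)
    (hmin : ∀ y : X, Dense (Set.range fun s : G => s • y))
    (hniso : ∀ x : X, ¬ IsOpen ({x} : Set X)) :
    ∀ s : G, s ≠ 1 → Dense {x : X | s • x ≠ x} := by
  classical
  have hp0 : p ≠ 0 := hp.pos.ne'
  have hcardG : Nat.card G = 0 := Nat.card_eq_zero_of_infinite
  -- every nontrivial element has order p
  have horder : ∀ t : G, t ≠ 1 → orderOf t = p := by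
    intro t ht
    by_cases htop : Subgroup.zpowers t = ⊤
    · exfalso
      have h0 : orderOf t = 0 := by
        rw [← Nat.card_zpowers, htop, Subgroup.card_top]; exact hcardG
      have hfin : ¬ IsOfFinOrder t := orderOf_eq_zero_iff.mp h0
      have ht2 : t ^ 2 ≠ 1 := by
        intro h
        exact hfin (isOfFinOrder_iff_pow_eq_one.mpr ⟨2, by norm_num, h⟩)
      by_cases hK : Subgroup.zpowers (t ^ 2) = ⊤
      · have htmem : t ∈ Subgroup.zpowers (t ^ 2) := hK ▸ Subgroup.mem_top t
        obtain ⟨k, hk⟩ := Subgroup.mem_zpowers_iff.mp htmem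
        have hk' : t ^ (2 * k) = t ^ (1 : ℤ) := by
          rw [zpow_mul, zpow_one]
          rw [show ((2 : ℤ)) = ((2 : ℕ) : ℤ) by norm_num, zpow_natCast]
          exact hk
        have hinj : Function.Injective fun n : ℤ => t ^ n :=
          injective_zpow_iff_not_isOfFinOrder.mpr hfin
        have := hinj hk'
        omega
      · have hKbot : Subgroup.zpowers (t ^ 2) ≠ ⊥ := by
          simpa [Subgroup.zpowers_eq_bot] using ht2
        have hc := (htarski _ hKbot hK).2
        rw [Nat.card_zpowers] at hc
        have hone := pow_orderOf_eq_one (t ^ 2)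
        rw [hc] at hone
        refine hfin (isOfFinOrder_iff_pow_eq_one.mpr ⟨2 * p, by omega, ?_⟩)
        rw [pow_mul]; exact hone
    · have hbot : Subgroup.zpowers t ≠ ⊥ := by
        simpa [Subgroup.zpowers_eq_bot] using ht
      have hc := (htarski _ hbot htop).2
      rwa [Nat.card_zpowers] at hc
  -- two subgroups of card p with one contained in the other are equal
  have hsub_eq : ∀ (H K : Subgroup G), H ≤ K → Nat.card H = p → Nat.card K = p → H = K := by
    intro H K hle hH hK
    have hfinK : Finite K := Nat.finite_of_card_ne_zero (by rw [hK]; exact hp0)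
    apply SetLike.ext'
    apply Set.eq_of_subset_of_ncard_le hle _ (Set.toFinite _)
    rw [← Nat.card_coe_set_eq, ← Nat.card_coe_set_eq, SetLike.coe_sort_coe,
      SetLike.coe_sort_coe, hH, hK]
  -- maximality of subgroups of order p
  have hmax : ∀ (H K : Subgroup G), H ≤ K → Nat.card H = p → K = H ∨ K = ⊤ := by
    intro H K hle hH
    by_cases htop : K = ⊤
    · exact Or.inr htop
    · left
      have hKbot : K ≠ ⊥ := by
        rintro rfl
        rw [le_bot_iff] at hle
        rw [hle, Subgroup.card_bot] at hH
        exact hp.one_lt.ne hH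
      exact (hsub_eq H K hle hH (htarski K hKbot htop).2).symm
  -- main argument
  intro s hs
  by_contra hnd
  rw [dense_iff_inter_open] at hnd
  push_neg at hnd
  obtain ⟨U, hUo, hUne, hUcap⟩ := hnd
  have hfixU : ∀ y ∈ U, s • y = y := by
    intro y hy
    by_contra h
    exact Set.eq_empty_iff_forall_notMem.mp hUcap y ⟨hy, h⟩
  set H := Subgroup.zpowers s with hHdef
  have hHcard : Nat.card H = p := by rw [hHdef, Nat.card_zpowers, horder s hs]
  have hHfin : (H : Set G).Finite := by
    have : Finite H := Nat.finite_of_card_ne_zero (by rw [hHcard]; exact hp0)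
    exact Set.toFinite _
  -- no point is fixed by all of G
  have hstab_ne_top : ∀ y : X, MulAction.stabilizer G y ≠ ⊤ := by
    intro y hy
    have hall : ∀ g : G, g • y = y := by
      intro g
      have hg : g ∈ MulAction.stabilizer G y := hy ▸ Subgroup.mem_top g
      exact hg
    have hrange : (Set.range fun g : G => g • y) = {y} := by
      ext z
      constructor
      · rintro ⟨g, rfl⟩; exact hall g
      · rintro rfl; exact ⟨1, hall 1⟩
    have hdense := hmin y
    rw [hrange] at hdense
    have huniv : ({y} : Set X) = Set.univ := by
      rw [← closure_singleton]
      exact hdense.closure_eq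
    apply hniso y
    rw [huniv]
    exact isOpen_univ
  -- stabilizer of each point of U is exactly H
  have hstabU : ∀ y ∈ U, MulAction.stabilizer G y = H := by
    intro y hy
    have hle : H ≤ MulAction.stabilizer G y := by
      rw [hHdef, Subgroup.zpowers_le]
      exact hfixU y hy
    rcases hmax H _ hle hHcard with h | h
    · exact h
    · exact absurd h (hstab_ne_top y)
  -- H is not normal (else G would be finite)
  have hHnotnormal : Subgroup.normalizer (H : Set G) ≠ ⊤ := by
    intro hnorm
    have hN : H.Normal := Subgroup.normalizer_eq_top_iff.mp hnorm
    obtain ⟨g₀, hg₀⟩ : ∃ g₀ : G, g₀ ∉ H := by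
      by_contra h
      push_neg at h
      have : H = ⊤ := (Subgroup.eq_top_iff' _).mpr h
      rw [this, Subgroup.card_top, hcardG] at hHcard
      exact hp0 hHcard.symm
    have hg₀1 : g₀ ≠ 1 := fun h => hg₀ (h ▸ H.one_mem)
    set K := Subgroup.zpowers g₀ with hKdef
    have hKcard : Nat.card K = p := by rw [hKdef, Nat.card_zpowers, horder g₀ hg₀1]
    have hKfin : (K : Set G).Finite := by
      have : Finite K := Nat.finite_of_card_ne_zero (by rw [hKcard]; exact hp0)
      exact Set.toFinite _
    have hJset : ((H ⊔ K : Subgroup G) : Set G) = (H : Set G) * (K : Set G) :=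
      Subgroup.normal_mul H K
    have hJfin : ((H ⊔ K : Subgroup G) : Set G).Finite := by
      rw [hJset]; exact hHfin.mul hKfin
    have hJtop : H ⊔ K ≠ ⊤ := by
      intro h
      have : (Set.univ : Set G).Finite := by
        have := hJfin
        rw [h] at this
        simpa using this
      exact Set.infinite_univ this
    rcases hmax H (H ⊔ K) le_sup_left hHcard with h | h
    · have : K ≤ H := h ▸ le_sup_right
      exact hg₀ (this (Subgroup.mem_zpowers g₀))
    · exact hJtop h
  -- key: if x and g • x both lie in U, then g ∈ H
  have hkey : ∀ x ∈ U, ∀ g : G, g • x ∈ U → g ∈ H := by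
    intro x hx g hgx
    -- the conjugate g s g⁻¹ fixes g • x
    have hconjfix : (g * s * g⁻¹) • (g • x) = g • x := by
      rw [smul_smul, inv_mul_cancel_right, mul_smul, hfixU x hx]
    have hconjmem : g * s * g⁻¹ ∈ H := by
      have := hstabU _ hgx
      rw [← this]
      exact hconjfix
    have hconj1 : g * s * g⁻¹ ≠ 1 := fun h => hs (conj_eq_one_iff.mp h)
    have hconj_eq : Subgroup.zpowers (g * s * g⁻¹) = H := by
      apply hsub_eq
      · exact Subgroup.zpowers_le.mpr hconjmem
      · rw [Nat.card_zpowers, horder _ hconj1]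
      · exact hHcard
    -- g normalizes H
    have hgN : g ∈ Subgroup.normalizer (H : Set G) := by
      rw [Subgroup.mem_normalizer_iff]
      intro h
      constructor
      · intro hh
        obtain ⟨k, rfl⟩ := Subgroup.mem_zpowers_iff.mp hh
        have : g * s ^ k * g⁻¹ = (g * s * g⁻¹) ^ k := (conj_zpow).symm
        rw [this, ← hconj_eq]
        exact zpow_mem (Subgroup.mem_zpowers _) k
      · intro hh
        rw [← hconj_eq] at hh
        obtain ⟨k, hk⟩ := Subgroup.mem_zpowers_iff.mp hh
        rw [conj_zpow] at hk
        have : s ^ k = h := by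
          have := mul_left_cancel (mul_right_cancel hk)
          exact this
        rw [← this]
        exact zpow_mem (Subgroup.mem_zpowers s) k
    rcases hmax H (Subgroup.normalizer (H : Set G)) Subgroup.le_normalizer hHcard with h | h
    · rw [← h]; exact hgN
    · exact absurd h hHnotnormal
  -- conclude: U is a singleton, contradicting no isolated points
  obtain ⟨x, hx⟩ := hUne
  have hUsub : U ⊆ {x} := by
    intro u hu
    by_contra hux
    have hop : IsOpen (U ∩ {x}ᶜ) := hUo.inter isOpen_compl_singleton
    have hne : (U ∩ {x}ᶜ).Nonempty := ⟨u, hu, hux⟩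
    obtain ⟨z, hzV, hzr⟩ := dense_iff_inter_open.mp (hmin x) _ hop hne
    obtain ⟨g, hg⟩ := hzr
    have hg' : g • x = z := hg
    have hzU : z ∈ U := hzV.1
    have : g • x = x := by
      have hgH : g ∈ H := hkey x hx g (by rw [hg']; exact hzU)
      have := hstabU x hx
      rw [← this] at hgH
      exact hgH
    rw [this] at hg'
    exact hzV.2 hg'.symm
  have hUeq : U = {x} := Set.Subset.antisymm hUsub (Set.singleton_subset_iff.mpr hx)
  rw [hUeq] at hUo
  exact hniso x hUo
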